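/- Let σ₋ < ω₋ < ω₊ < ω₊' < σ₊ be real numbers, q ∈ ℂ with q ≠ 0, and x, h ∈ ℝ. Let φ⁺ and Ĝ be holomorphic on the strip {σ₋ < Im z < σ₊} with |φ⁺(z)·Ĝ(z)| ≤ C·(1 + |z|)^{−s} on the strip for some C > 0, s > 1. Let φ⁻ and ψ be continuous complex-valued functions on the line {Im ξ = ω₊} such that q + ψ(ξ) ≠ 0 and the Wiener–Hopf factorization identity φ⁺(ξ)·φ⁻(ξ)·(q + ψ(ξ)) = q holds for every ξ on this line. For ω ∈ {ω₋, ω₊'} define I_ω(ξ) = (1/(2πi))·∫_ℝ e^{i·h·(t + iω − ξ)}·φ⁺(t + iω)·Ĝ(t + iω)/(ξ − t − iω) dt. Assume that t ↦ e^{i·x·(t + iω₊)}·φ⁻(t + iω₊)·I_{ω₊'}(t + iω₊) and t ↦ e^{i·x·(t + iω₊)}·φ⁻(t + iω₊)·I_{ω₋}(t + iω₊) are Lebesgue integrable on ℝ. Then (1/(2πq))·∫_ℝ e^{i·x·(t + iω₊)}·φ⁻(t + iω₊)·I_{ω₊'}(t + iω₊) dt = (1/(2πq))·∫_ℝ e^{i·x·(t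 + iω₊)}·φ⁻(t + iω₊)·I_{ω₋}(t + iω₊) dt + (1/(2π))·∫_ℝ e^{i·x·(t + iω₊)}·Ĝ(t + iω₊)/(q + ψ(t + iω₊)) dt, the last integrand also being integrable. (The analytic core of Theorem 5.2: the Laplace–Fourier representation (eq:LTFT)+(eq:LTFTpr) of the no-touch option value q^{−1}·F^{−1}[φ⁻·Π⁺_h(φ⁺·Ĝ)], obtained by crossing the pole at η = ξ and applying the Wiener–Hopf factorization.) -/

import Mathlib

open MeasureTheory Set

section Helpers
open Filter Complex

lemma loglim_pos (c : ℂ) (hc : 0 < c.im) :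
    Tendsto (fun R : ℝ => Complex.log (c + R) - Complex.log (c - R)) atTop
      (nhds (-(Real.pi : ℂ) * Complex.I)) := by
  have hne : ∀ R : ℝ, c + R ≠ 0 := fun R h => by
    have := congrArg Complex.im h; simp at this; exact hc.ne' this
  have hne' : ∀ R : ℝ, c - R ≠ 0 := fun R h => by
    have := congrArg Complex.im h; simp at this; exact hc.ne' this
  -- (c+R)/(c-R) → -1
  have hdiv : Tendsto (fun R : ℝ => (c + R) / (c - R)) atTop (nhds (-1)) := by
    have hinv : Tendsto (fun R : ℝ => ((R : ℂ))⁻¹) atTop (nhds 0) := by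
      have := tendsto_inv_atTop_zero (𝕜 := ℝ)
      have h2 := (Complex.continuous_ofReal.tendsto 0).comp this
      simpa [Function.comp_def, Complex.ofReal_inv] using h2
    have h1 : Tendsto (fun R : ℝ => (c * (R : ℂ)⁻¹ + 1) / (c * (R : ℂ)⁻¹ - 1)) atTop
        (nhds (-1)) := by
      have hnum : Tendsto (fun R : ℝ => c * (R : ℂ)⁻¹ + 1) atTop (nhds 1) := by
        simpa using ((hinv.const_mul c).add tendsto_const_nhds)
      have hden : Tendsto (fun R : ℝ => c * (R : ℂ)⁻¹ - 1) atTop (nhds (-1)) := by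
        simpa using ((hinv.const_mul c).sub tendsto_const_nhds)
      have h3 := hnum.div hden (by norm_num)
      simp only [div_neg, div_one] at h3
      exact h3
    refine h1.congr' ?_
    filter_upwards [eventually_gt_atTop (0 : ℝ)] with R hR
    have hR0 : (R : ℂ) ≠ 0 := by exact_mod_cast hR.ne'
    field_simp
  -- real part
  have hre : Tendsto (fun R : ℝ => (Complex.log (c + R) - Complex.log (c - R)).re) atTop
      (nhds 0) := by
    have habs : Tendsto (fun R : ℝ => ‖(c + R) / (c - R)‖) atTop (nhds 1) := by
      have := (continuous_norm.tendsto (-1)).comp hdiv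
      simpa [Function.comp_def, map_div₀] using this
    have hlog : Tendsto (fun R : ℝ => Real.log (‖(c + R) / (c - R)‖)) atTop
        (nhds 0) := by
      have := (Real.continuousAt_log (by norm_num : (1:ℝ) ≠ 0)).tendsto.comp habs
      simpa [Function.comp_def] using this
    refine hlog.congr ?_
    intro R
    rw [norm_div, Real.log_div (norm_ne_zero_iff.mpr (hne R)) (norm_ne_zero_iff.mpr (hne' R))]
    simp [Complex.sub_re, Complex.log_re]
  -- imaginary part
  have him : Tendsto (fun R : ℝ => (Complex.log (c + R) - Complex.log (c - R)).im) atTop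
      (nhds (-Real.pi)) := by
    have harg1 : Tendsto (fun R : ℝ => Complex.arg (c + R)) atTop (nhds 0) := by
      have hq : Tendsto (fun R : ℝ => c * (R : ℂ)⁻¹ + 1) atTop (nhds 1) := by
        have hinv : Tendsto (fun R : ℝ => ((R : ℂ))⁻¹) atTop (nhds 0) := by
          have := tendsto_inv_atTop_zero (𝕜 := ℝ)
          have h2 := (Complex.continuous_ofReal.tendsto 0).comp this
          simpa [Function.comp_def, Complex.ofReal_inv] using h2
        simpa using ((hinv.const_mul c).add tendsto_const_nhds)
      have hcont : ContinuousAt Complex.arg 1 :=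
        Complex.continuousAt_arg (by simp [Complex.slitPlane] : (1:ℂ) ∈ Complex.slitPlane)
      have := hcont.tendsto.comp hq
      rw [Complex.arg_one] at this
      refine this.congr' ?_
      filter_upwards [eventually_gt_atTop (0 : ℝ)] with R hR
      have hR0 : (R : ℂ) ≠ 0 := by exact_mod_cast hR.ne'
      have heq : c * (R : ℂ)⁻¹ + 1 = ((R⁻¹ : ℝ) : ℂ) * (c + R) := by
        push_cast; field_simp
      simp only [Function.comp_def]
      rw [heq, Complex.arg_real_mul (c + R) (inv_pos.mpr hR)]
    have harg2 : Tendsto (fun R : ℝ => Complex.arg (c - R)) atTop (nhds Real.pi) := by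
      have habsTop : Tendsto (fun R : ℝ => ‖c - R‖) atTop atTop := by
        refine tendsto_atTop_mono' atTop ?_ (tendsto_atTop_add_const_right atTop (-c.re) tendsto_id)
        filter_upwards [eventually_ge_atTop (c.re : ℝ)] with R hR
        calc R + -c.re = |(c - (R:ℂ)).re| := by
              simp only [Complex.sub_re, Complex.ofReal_re]
              rw [abs_of_nonpos (by linarith)]; ring
          _ ≤ ‖c - R‖ := Complex.abs_re_le_norm _
      have hfrac : Tendsto (fun R : ℝ => (-(c - (R:ℂ))).im / ‖c - R‖) atTop
          (nhds 0) := by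
        have := Filter.Tendsto.div_atTop (tendsto_const_nhds (x := (-c.im))) habsTop
        refine this.congr ?_
        intro R; simp
      have harcsin := (Real.continuous_arcsin.tendsto 0).comp hfrac
      rw [Real.arcsin_zero] at harcsin
      have hsum := harcsin.add (tendsto_const_nhds (x := Real.pi))
      rw [zero_add] at hsum
      refine hsum.congr' ?_
      filter_upwards [eventually_gt_atTop (c.re : ℝ)] with R hR
      have hre : (c - (R:ℂ)).re < 0 := by
        simp only [Complex.sub_re, Complex.ofReal_re]; linarith
      have him0 : 0 ≤ (c - (R:ℂ)).im := by
        simp only [Complex.sub_im, Complex.ofReal_im, sub_zero]; exact le_of_lt hc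
      rw [Complex.arg_of_re_neg_of_im_nonneg hre him0]
      simp [Function.comp_def]
    have := harg1.sub harg2
    rw [zero_sub] at this
    refine this.congr ?_
    intro R; simp [Complex.sub_im, Complex.log_im]
  -- combine
  have hcomb := ((Complex.continuous_ofReal.tendsto 0).comp hre).add
    (((Complex.continuous_ofReal.tendsto _).comp him).mul_const Complex.I)
  have hpt : ∀ R : ℝ,
      (((Complex.log (c + R) - Complex.log (c - R)).re : ℝ) : ℂ) +
        (((Complex.log (c + R) - Complex.log (c - R)).im : ℝ) : ℂ) * Complex.I
        = Complex.log (c + R) - Complex.log (c - R) := fun R => Complex.re_add_im _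
  have hfin := hcomb.congr hpt
  rwa [show ((0:ℝ):ℂ) + ((-Real.pi : ℝ):ℂ) * Complex.I = -(Real.pi:ℂ) * Complex.I by
    push_cast; ring] at hfin

lemma loglim_neg (c : ℂ) (hc : c.im < 0) :
    Tendsto (fun R : ℝ => Complex.log (c + R) - Complex.log (c - R)) atTop
      (nhds ((Real.pi : ℂ) * Complex.I)) := by
  have key := loglim_pos (starRingEnd ℂ c) (by simpa using hc)
  have hconj := (Complex.continuous_conj.tendsto _).comp key
  have hval : (starRingEnd ℂ) (-(Real.pi : ℂ) * Complex.I) = (Real.pi : ℂ) * Complex.I := by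
    simp [map_mul, Complex.conj_I]
  rw [hval] at hconj
  refine hconj.congr fun R => ?_
  have h1 : ((starRingEnd ℂ) c + (R:ℂ)).arg ≠ Real.pi := by
    intro hpi
    obtain ⟨-, him⟩ := Complex.arg_eq_pi_iff.mp hpi
    simp at him; exact hc.ne him
  have h2 : ((starRingEnd ℂ) c - (R:ℂ)).arg ≠ Real.pi := by
    intro hpi
    obtain ⟨-, him⟩ := Complex.arg_eq_pi_iff.mp hpi
    simp at him; exact hc.ne him
  simp only [Function.comp_def, map_sub]
  rw [← Complex.log_conj _ h1, ← Complex.log_conj _ h2]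
  simp

lemma Kint (ξ : ℂ) (ω : ℝ) (hω : ξ.im ≠ ω) (R : ℝ) :
    ∫ t : ℝ in (-R)..R, (ξ - t - ω * Complex.I)⁻¹
      = Complex.log (ξ + R - ω * Complex.I) - Complex.log (ξ - R - ω * Complex.I) := by
  have hne : ∀ t : ℝ, ξ - t - ω * Complex.I ≠ 0 := by
    intro t h
    have := congrArg Complex.im h
    simp at this
    exact hω (by linarith)
  have hmem : ∀ t : ℝ, ξ - t - ω * Complex.I ∈ Complex.slitPlane := by
    intro t
    refine Or.inr ?_
    simp only [Complex.sub_im, Complex.ofReal_im, Complex.mul_im, Complex.I_im, Complex.I_re,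
      Complex.ofReal_re, mul_zero, mul_one, zero_add, sub_zero]
    intro h; exact hω (by linarith)
  have hderiv : ∀ t ∈ Set.uIcc (-R) R,
      HasDerivAt (fun t : ℝ => -Complex.log (ξ - t - ω * Complex.I))
        ((ξ - t - ω * Complex.I)⁻¹) t := by
    intro t _
    have hinner : HasDerivAt (fun z : ℂ => ξ - z - ω * Complex.I) (-1) (t : ℂ) := by
      simpa using (((hasDerivAt_id (t : ℂ)).const_sub ξ).sub_const (ω * Complex.I))
    have hlog := (Complex.hasDerivAt_log (hmem t)).comp (t : ℂ) hinner
    have := hlog.neg.comp_ofReal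
    convert this using 1
    · rfl
    · ring
  have hint : IntervalIntegrable (fun t : ℝ => (ξ - t - ω * Complex.I)⁻¹) volume (-R) R := by
    refine Continuous.intervalIntegrable ?_ _ _
    exact (Continuous.sub (continuous_const.sub Complex.continuous_ofReal)
      continuous_const).inv₀ hne
  rw [intervalIntegral.integral_eq_sub_of_hasDerivAt hderiv hint]
  push_cast
  ring_nf

lemma line_integrable (σm σp : ℝ) (φp Ghat : ℂ → ℂ) (C s : ℝ) (hs : 1 < s)
    (hcont : ContinuousOn (fun z => φp z * Ghat z) {z : ℂ | σm < z.im ∧ z.im < σp})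
    (hbound : ∀ z : ℂ, σm < z.im → z.im < σp →
      ‖φp z * Ghat z‖ ≤ C * (1 + ‖z‖) ^ (-s))
    (h : ℝ) (ξ : ℂ) (ω : ℝ) (hσ : σm < ω) (hσ' : ω < σp) (hων : ξ.im ≠ ω) :
    Integrable (fun t : ℝ => Complex.exp (Complex.I * h * ((t : ℂ) + ω * Complex.I - ξ)) *
      φp ((t : ℂ) + ω * Complex.I) * Ghat ((t : ℂ) + ω * Complex.I) /
        (ξ - t - ω * Complex.I)) := by
  set d : ℝ := |ξ.im - ω| with hd
  have hd0 : 0 < d := abs_pos.mpr (sub_ne_zero.mpr hων)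
  set M : ℝ := Real.exp (-h * (ω - ξ.im)) with hM
  have hmemS : ∀ t : ℝ, ((t : ℂ) + ω * Complex.I) ∈ {z : ℂ | σm < z.im ∧ z.im < σp} := by
    intro t; constructor <;> simp [hσ, hσ']
  have hne : ∀ t : ℝ, ξ - t - ω * Complex.I ≠ 0 := by
    intro t h'
    have := congrArg Complex.im h'
    simp at this
    exact hων (by linarith)
  have hcont2 : Continuous fun t : ℝ =>
      Complex.exp (Complex.I * h * ((t : ℂ) + ω * Complex.I - ξ)) *
        (φp ((t : ℂ) + ω * Complex.I) * Ghat ((t : ℂ) + ω * Complex.I)) /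
          (ξ - t - ω * Complex.I) := by
    have hmap : Continuous fun t : ℝ => (t : ℂ) + ω * Complex.I :=
      Complex.continuous_ofReal.add continuous_const
    refine Continuous.div ?_ ?_ hne
    · exact (Complex.continuous_exp.comp (by continuity)).mul
        (hcont.comp_continuous hmap hmemS)
    · exact continuous_const.sub Complex.continuous_ofReal |>.sub continuous_const
  have hintg : Integrable (fun t : ℝ => (M * C / d) * (1 + ‖t‖) ^ (-s)) := by
    exact (integrable_one_add_norm (by simpa using hs)).const_mul _
  have hI1 : Integrable (fun t : ℝ =>
      Complex.exp (Complex.I * h * ((t : ℂ) + ω * Complex.I - ξ)) *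
        (φp ((t : ℂ) + ω * Complex.I) * Ghat ((t : ℂ) + ω * Complex.I)) /
          (ξ - t - ω * Complex.I)) := by
    refine hintg.mono' hcont2.aestronglyMeasurable ?_
    refine Filter.Eventually.of_forall fun t => ?_
    set η : ℂ := (t : ℂ) + ω * Complex.I with hη
    have hmem := hmemS t
    have habs_exp : ‖Complex.exp (Complex.I * h * (η - ξ))‖ = M := by
      rw [Complex.norm_exp]
      congr 1
      simp [hη, Complex.mul_re, Complex.mul_im]
    have habs_den : d ≤ ‖ξ - t - ω * Complex.I‖ := by
      have := Complex.abs_im_le_norm (ξ - t - ω * Complex.I)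
      have him : (ξ - (t : ℂ) - ω * Complex.I).im = ξ.im - ω := by simp
      rw [him] at this
      exact this
    have habs_fg : ‖φp η * Ghat η‖ ≤ C * (1 + ‖t‖) ^ (-s) := by
      refine (hbound η hmem.1 hmem.2).trans ?_
      have h1 : (1 : ℝ) + ‖t‖ ≤ 1 + ‖η‖ := by
        have : |t| ≤ ‖η‖ := by
          have := Complex.abs_re_le_norm η
          simpa [hη] using this
        simpa [Real.norm_eq_abs] using this
      have h0 : (0 : ℝ) < 1 + ‖t‖ := by positivity
      have hCnn : 0 ≤ C := by
        have := (norm_nonneg (φp η * Ghat η)).trans (hbound η hmem.1 hmem.2)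
        nlinarith [Real.rpow_pos_of_pos (by positivity : (0:ℝ) < 1 + ‖η‖) (-s)]
      refine mul_le_mul_of_nonneg_left ?_ hCnn
      rw [Real.rpow_neg (by positivity), Real.rpow_neg h0.le]
      exact inv_anti₀ (Real.rpow_pos_of_pos h0 s)
        (Real.rpow_le_rpow h0.le (by linarith) (by linarith))
    rw [norm_div, norm_mul]
    rw [habs_exp]
    have hden_pos : 0 < ‖ξ - t - ω * Complex.I‖ :=
      norm_pos_iff.mpr (hne t)
    calc M * ‖φp η * Ghat η‖ / ‖ξ - t - ω * Complex.I‖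
        ≤ M * (C * (1 + ‖t‖) ^ (-s)) / d := by
          have hM0 : 0 ≤ M := Real.exp_nonneg _
          gcongr
          exact mul_nonneg hM0 ((norm_nonneg _).trans habs_fg)
      _ = M * C / d * (1 + ‖t‖) ^ (-s) := by ring
  exact hI1.congr (Filter.Eventually.of_forall fun t => by ring)

lemma crossing (σm σp a b : ℝ) (φp Ghat : ℂ → ℂ) (C s : ℝ) (hC : 0 < C) (hs : 1 < s)
    (hφp : DifferentiableOn ℂ φp {z : ℂ | σm < z.im ∧ z.im < σp})
    (hGhat : DifferentiableOn ℂ Ghat {z : ℂ | σm < z.im ∧ z.im < σp})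
    (hbound : ∀ z : ℂ, σm < z.im → z.im < σp →
      ‖φp z * Ghat z‖ ≤ C * (1 + ‖z‖) ^ (-s))
    (h : ℝ) (ξ : ℂ) (hσa : σm < a) (hav : a < ξ.im) (hvb : ξ.im < b) (hbσ : b < σp) :
    Integrable (fun t : ℝ => Complex.exp (Complex.I * h * ((t : ℂ) + b * Complex.I - ξ)) *
        φp ((t : ℂ) + b * Complex.I) * Ghat ((t : ℂ) + b * Complex.I) /
          (ξ - t - b * Complex.I)) ∧
    Integrable (fun t : ℝ => Complex.exp (Complex.I * h * ((t : ℂ) + a * Complex.I - ξ)) *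
        φp ((t : ℂ) + a * Complex.I) * Ghat ((t : ℂ) + a * Complex.I) /
          (ξ - t - a * Complex.I)) ∧
    (∫ t : ℝ, Complex.exp (Complex.I * h * ((t : ℂ) + b * Complex.I - ξ)) *
        φp ((t : ℂ) + b * Complex.I) * Ghat ((t : ℂ) + b * Complex.I) /
          (ξ - t - b * Complex.I))
      - (∫ t : ℝ, Complex.exp (Complex.I * h * ((t : ℂ) + a * Complex.I - ξ)) *
        φp ((t : ℂ) + a * Complex.I) * Ghat ((t : ℂ) + a * Complex.I) /
          (ξ - t - a * Complex.I))
      = 2 * Real.pi * Complex.I * (φp ξ * Ghat ξ) := by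
  have hab : a ≤ b := by linarith
  set S : Set ℂ := {z : ℂ | σm < z.im ∧ z.im < σp} with hS
  have hSopen : IsOpen S := by
    have : S = Complex.im ⁻¹' (Ioo σm σp) := by
      ext z; simp [hS, mem_Ioo]
    rw [this]
    exact isOpen_Ioo.preimage Complex.continuous_im
  have hξS : ξ ∈ S := ⟨by linarith, by linarith⟩
  set E : ℂ → ℂ := fun z => Complex.exp (Complex.I * h * (z - ξ)) * (φp z * Ghat z) with hE
  have hEdiff : DifferentiableOn ℂ E S := by
    refine DifferentiableOn.mul ?_ (hφp.mul hGhat)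
    exact (Complex.differentiable_exp.comp
      (((differentiable_id.sub_const ξ).const_mul (Complex.I * h)))).differentiableOn
  have hEcont : ContinuousOn E S := hEdiff.continuousOn
  have hEξ : E ξ = φp ξ * Ghat ξ := by simp [hE]
  set G : ℂ → ℂ := dslope E ξ with hG
  have hGdiff : DifferentiableOn ℂ G S := by
    intro z hz
    rcases eq_or_ne z ξ with rfl | hzξ
    · obtain ⟨p, hp⟩ := hEdiff.analyticAt (hSopen.mem_nhds hξS)
      exact (hp.has_fpower_series_dslope_fslope).analyticAt.differentiableAt.differentiableWithinAt
    · exact (differentiableWithinAt_dslope_of_ne hzξ).mpr (hEdiff z hz)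
  set F : ℂ → ℂ := fun η => E η / (ξ - η) with hF
  -- membership of rectangles in S
  have hrect : ∀ R : ℝ, Set.uIcc (-R) R ×ℂ Set.uIcc a b ⊆ S := by
    intro R z hz
    rw [Complex.mem_reProdIm] at hz
    have him := hz.2
    rw [Set.uIcc_of_le hab] at him
    exact ⟨by linarith [him.1], by linarith [him.2]⟩
  -- pointwise splitting off the pole
  have hsplit : ∀ η : ℂ, η ≠ ξ → F η = -G η + E ξ * (ξ - η)⁻¹ := by
    intro η hη
    rw [hF, hG, dslope_of_ne E hη, slope_def_field,
      show η - ξ = -(ξ - η) by ring, div_neg]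
    ring
  -- integrability on the two horizontal lines
  have hIb := line_integrable σm σp φp Ghat C s hs (hφp.mul hGhat).continuousOn hbound
    h ξ b (by linarith) hbσ hvb.ne
  have hIa := line_integrable σm σp φp Ghat C s hs (hφp.mul hGhat).continuousOn hbound
    h ξ a hσa (by linarith) hav.ne'
  -- relation between the two integrand forms
  have hFform : ∀ (ω : ℝ) (t : ℝ), F ((t : ℂ) + ω * Complex.I) =
      Complex.exp (Complex.I * h * ((t : ℂ) + ω * Complex.I - ξ)) *
        φp ((t : ℂ) + ω * Complex.I) * Ghat ((t : ℂ) + ω * Complex.I) /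
          (ξ - t - ω * Complex.I) := by
    intro ω t
    simp only [hF, hE]
    ring
  have hFbInt : Integrable (fun t : ℝ => F ((t : ℂ) + b * Complex.I)) :=
    hIb.congr (Filter.Eventually.of_forall fun t => (hFform b t).symm)
  have hFaInt : Integrable (fun t : ℝ => F ((t : ℂ) + a * Complex.I)) :=
    hIa.congr (Filter.Eventually.of_forall fun t => (hFform a t).symm)
  -- non-equality facts
  have hne_a : ∀ t : ℝ, ((t : ℂ) + a * Complex.I) ≠ ξ := by
    intro t hcon
    have := congrArg Complex.im hcon
    simp at this
    linarith
  have hne_b : ∀ t : ℝ, ((t : ℂ) + b * Complex.I) ≠ ξ := by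
    intro t hcon
    have := congrArg Complex.im hcon
    simp at this
    linarith
  -- the per-R boundary identity
  have hperR : ∀ R : ℝ, |ξ.re| + 1 ≤ R →
      (∫ t : ℝ in (-R)..R, F ((t : ℂ) + a * Complex.I))
        - (∫ t : ℝ in (-R)..R, F ((t : ℂ) + b * Complex.I))
        + Complex.I * (∫ y : ℝ in a..b, F ((R : ℂ) + y * Complex.I))
        - Complex.I * (∫ y : ℝ in a..b, F (((-R : ℝ) : ℂ) + y * Complex.I))
      = E ξ * ((∫ t : ℝ in (-R)..R, (ξ - ((t : ℂ) + a * Complex.I))⁻¹)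
        - (∫ t : ℝ in (-R)..R, (ξ - ((t : ℂ) + b * Complex.I))⁻¹)
        + Complex.I * (∫ y : ℝ in a..b, (ξ - ((R : ℂ) + y * Complex.I))⁻¹)
        - Complex.I * (∫ y : ℝ in a..b, (ξ - (((-R : ℝ) : ℂ) + y * Complex.I))⁻¹)) := by
    intro R hR
    have hRpos : (0 : ℝ) < R := by have := abs_nonneg ξ.re; linarith
    have hRR : -R ≤ R := by linarith
    have hne_r : ∀ y : ℝ, ((R : ℂ) + y * Complex.I) ≠ ξ := by
      intro y hcon
      have := congrArg Complex.re hcon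
      simp at this
      have h1 : ξ.re ≤ |ξ.re| := le_abs_self _
      linarith
    have hne_l : ∀ y : ℝ, (((-R : ℝ) : ℂ) + y * Complex.I) ≠ ξ := by
      intro y hcon
      have := congrArg Complex.re hcon
      simp at this
      have h1 : -|ξ.re| ≤ ξ.re := neg_abs_le _
      linarith
    -- memberships
    have hmem_a : ∀ t : ℝ, ((t : ℂ) + a * Complex.I) ∈ S := by
      intro t; exact ⟨by simp; linarith, by simp; linarith⟩
    have hmem_b : ∀ t : ℝ, ((t : ℂ) + b * Complex.I) ∈ S := by
      intro t; exact ⟨by simp; linarith, by simp; linarith⟩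
    have hmem_r : ∀ y : ℝ, y ∈ Set.uIcc a b → ((R : ℂ) + y * Complex.I) ∈ S := by
      intro y hy
      rw [Set.uIcc_of_le hab] at hy
      exact ⟨by simp; linarith [hy.1], by simp; linarith [hy.2]⟩
    have hmem_l : ∀ y : ℝ, y ∈ Set.uIcc a b → (((-R : ℝ) : ℂ) + y * Complex.I) ∈ S := by
      intro y hy
      rw [Set.uIcc_of_le hab] at hy
      exact ⟨by simp; linarith [hy.1], by simp; linarith [hy.2]⟩
    -- Cauchy-Goursat for G on the rectangle
    have e1 : ((↑(-R : ℝ) + ↑a * Complex.I : ℂ)).re = -R := by simp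
    have e2 : ((↑(-R : ℝ) + ↑a * Complex.I : ℂ)).im = a := by simp
    have e3 : ((↑(R : ℝ) + ↑b * Complex.I : ℂ)).re = R := by simp
    have e4 : ((↑(R : ℝ) + ↑b * Complex.I : ℂ)).im = b := by simp
    have key := Complex.integral_boundary_rect_eq_zero_of_differentiable_on_off_countable
      G (↑(-R : ℝ) + ↑a * Complex.I) (↑(R : ℝ) + ↑b * Complex.I) ∅ countable_empty ?_ ?_
    rotate_left
    · rw [e1, e2, e3, e4]
      exact hGdiff.continuousOn.mono (hrect R)
    · rw [e1, e2, e3, e4]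
      intro z hz
      rw [Set.mem_diff, Complex.mem_reProdIm] at hz
      obtain ⟨⟨hz1, hz2⟩, -⟩ := hz
      rw [min_eq_left hRR, max_eq_right hRR] at hz1
      rw [min_eq_left hab, max_eq_right hab] at hz2
      refine (hGdiff.differentiableAt (hSopen.mem_nhds ?_))
      exact ⟨by linarith [hz2.1], by linarith [hz2.2]⟩
    rw [e1, e2, e3, e4] at key
    simp only [smul_eq_mul] at key
    -- splitting on each segment
    have hsegsplit : ∀ (μ : ℝ → ℂ) (p q : ℝ), Continuous μ →
        (∀ y, y ∈ Set.uIcc p q → μ y ∈ S) → (∀ y, y ∈ Set.uIcc p q → μ y ≠ ξ) →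
        (∫ y in p..q, F (μ y)) = -(∫ y in p..q, G (μ y)) + E ξ * ∫ y in p..q, (ξ - μ y)⁻¹ := by
      intro μ p q hμ hmem hne
      have hGint : IntervalIntegrable (fun y => G (μ y)) volume p q := by
        refine ContinuousOn.intervalIntegrable ?_
        exact hGdiff.continuousOn.comp hμ.continuousOn (fun y hy => hmem y hy)
      have hKcont : ContinuousOn (fun y => (ξ - μ y)⁻¹) (Set.uIcc p q) := by
        refine ContinuousOn.inv₀ ((continuousOn_const.sub hμ.continuousOn)) ?_
        intro y hy
        exact sub_ne_zero.mpr (Ne.symm (hne y hy))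
      have hKint : IntervalIntegrable (fun y => (ξ - μ y)⁻¹) volume p q :=
        hKcont.intervalIntegrable
      rw [intervalIntegral.integral_congr
        (fun y hy => hsplit (μ y) (hne y hy) :
          Set.EqOn (fun y => F (μ y)) (fun y => -G (μ y) + E ξ * (ξ - μ y)⁻¹) (Set.uIcc p q))]
      exact (intervalIntegral.integral_add hGint.neg (hKint.const_mul (E ξ))).trans
        (by simp only [Pi.neg_apply]
            rw [intervalIntegral.integral_neg, intervalIntegral.integral_const_mul])
    have hsa := hsegsplit (fun t : ℝ => (t : ℂ) + a * Complex.I) (-R) R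
      (Complex.continuous_ofReal.add continuous_const) (fun t _ => hmem_a t)
      (fun t _ => hne_a t)
    have hsb := hsegsplit (fun t : ℝ => (t : ℂ) + b * Complex.I) (-R) R
      (Complex.continuous_ofReal.add continuous_const) (fun t _ => hmem_b t)
      (fun t _ => hne_b t)
    have hsr := hsegsplit (fun y : ℝ => (R : ℂ) + y * Complex.I) a b
      (continuous_const.add (Complex.continuous_ofReal.mul continuous_const))
      hmem_r (fun y _ => hne_r y)
    have hsl := hsegsplit (fun y : ℝ => ((-R : ℝ) : ℂ) + y * Complex.I) a b
      (continuous_const.add (Complex.continuous_ofReal.mul continuous_const))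
      hmem_l (fun y _ => hne_l y)
    rw [hsa, hsb, hsr, hsl]
    linear_combination -key
  -- horizontal F limits
  have hHa : Tendsto (fun R : ℝ => ∫ t : ℝ in (-R)..R, F ((t : ℂ) + a * Complex.I)) atTop
      (nhds (∫ t : ℝ, F ((t : ℂ) + a * Complex.I))) :=
    intervalIntegral_tendsto_integral hFaInt tendsto_neg_atTop_atBot tendsto_id
  have hHb : Tendsto (fun R : ℝ => ∫ t : ℝ in (-R)..R, F ((t : ℂ) + b * Complex.I)) atTop
      (nhds (∫ t : ℝ, F ((t : ℂ) + b * Complex.I))) :=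
    intervalIntegral_tendsto_integral hFbInt tendsto_neg_atTop_atBot tendsto_id
  -- squeeze principle
  have hsq : ∀ (f : ℝ → ℂ) (Mb : ℝ), (∀ R : ℝ, |ξ.re| + 1 ≤ R → ‖f R‖ ≤ Mb / (R - |ξ.re|)) →
      Tendsto f atTop (nhds 0) := by
    intro f Mb hb
    have hz : Tendsto (fun R : ℝ => Mb / (R - |ξ.re|)) atTop (nhds 0) :=
      Tendsto.div_atTop tendsto_const_nhds
        (tendsto_atTop_add_const_right _ _ tendsto_id)
    refine squeeze_zero_norm' ?_ hz
    filter_upwards [eventually_ge_atTop (|ξ.re| + 1)] with R hR using hb R hR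
  -- lower bound on the distance to the vertical sides
  have hdist : ∀ (R x : ℝ), |ξ.re| + 1 ≤ R → x = R ∨ x = -R → ∀ y : ℝ,
      R - |ξ.re| ≤ ‖ξ - ((x : ℂ) + y * Complex.I)‖ := by
    intro R x hR hx y
    have hre : (ξ - ((x : ℂ) + y * Complex.I)).re = ξ.re - x := by simp
    have h1 : |ξ.re - x| ≤ ‖ξ - ((x : ℂ) + y * Complex.I)‖ := by
      rw [← hre]; exact Complex.abs_re_le_norm _
    have h2 : R - |ξ.re| ≤ |ξ.re - x| := by
      have hR0 : 0 ≤ R := by linarith [abs_nonneg ξ.re]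
      rcases hx with rfl | rfl
      · have h3 := abs_sub_abs_le_abs_sub x ξ.re
        rw [abs_sub_comm]
        rw [_root_.abs_of_nonneg hR0] at h3
        linarith
      · have h3 := abs_sub_abs_le_abs_sub (-R) ξ.re
        rw [abs_neg, _root_.abs_of_nonneg hR0] at h3
        rw [abs_sub_comm]
        linarith
    linarith
  -- bound on E on the closed strip Icc a b
  set MX : ℝ := Real.exp (|h| * (|a| + |b| + |ξ.im|)) * C with hMX
  have hMX0 : 0 ≤ MX := mul_nonneg (Real.exp_nonneg _) hC.le
  have hEbound : ∀ η : ℂ, a ≤ η.im → η.im ≤ b → ‖E η‖ ≤ MX := by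
    intro η hy1 hy2
    have hmemS : η ∈ S := ⟨by linarith, by linarith⟩
    have hyabs : |η.im| ≤ |a| + |b| := by
      cases abs_cases η.im with
      | inl hc => have := le_abs_self b; have := abs_nonneg a; linarith [hc.1]
      | inr hc => have := neg_abs_le a; have := abs_nonneg b; linarith [hc.1]
    have hexp : ‖Complex.exp (Complex.I * h * (η - ξ))‖
        ≤ Real.exp (|h| * (|a| + |b| + |ξ.im|)) := by
      rw [Complex.norm_exp]
      apply Real.exp_le_exp.mpr
      have hre : (Complex.I * h * (η - ξ)).re = -h * (η.im - ξ.im) := by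
        simp [Complex.mul_re, Complex.mul_im]
      rw [hre]
      calc -h * (η.im - ξ.im) ≤ |(-h) * (η.im - ξ.im)| := le_abs_self _
        _ = |h| * |η.im - ξ.im| := by rw [abs_mul, abs_neg]
        _ ≤ |h| * (|η.im| + |ξ.im|) :=
            mul_le_mul_of_nonneg_left (abs_sub _ _) (abs_nonneg h)
        _ ≤ |h| * (|a| + |b| + |ξ.im|) := by
            refine mul_le_mul_of_nonneg_left ?_ (abs_nonneg h)
            linarith
    have hfg : ‖φp η * Ghat η‖ ≤ C := by
      refine (hbound η hmemS.1 hmemS.2).trans ?_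
      have : (1 + ‖η‖) ^ (-s) ≤ 1 :=
        Real.rpow_le_one_of_one_le_of_nonpos
          (by linarith [norm_nonneg η]) (by linarith)
      nlinarith
    calc ‖E η‖ = ‖Complex.exp (Complex.I * h * (η - ξ))‖
          * ‖φp η * Ghat η‖ := by
          rw [hE]; simp [map_mul]
      _ ≤ Real.exp (|h| * (|a| + |b| + |ξ.im|)) * C := by
          refine mul_le_mul hexp hfg (norm_nonneg _) (Real.exp_nonneg _)
  -- vertical F integrals vanish
  have hvertF : ∀ sgn : ℝ, (sgn = 1 ∨ sgn = -1) →
      Tendsto (fun R : ℝ => ∫ y in a..b, F (((sgn * R : ℝ) : ℂ) + y * Complex.I)) atTop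
        (nhds 0) := by
    intro sgn hsgn
    refine hsq _ (MX * |b - a|) ?_
    intro R hR
    have hd1 : (1 : ℝ) ≤ R - |ξ.re| := by linarith
    have hxs : sgn * R = R ∨ sgn * R = -R := by
      rcases hsgn with rfl | rfl
      · left; ring
      · right; ring
    have hb1 : ∀ y ∈ Set.uIoc a b, ‖F (((sgn * R : ℝ) : ℂ) + y * Complex.I)‖
        ≤ MX / (R - |ξ.re|) := by
      intro y hy
      rw [Set.uIoc_of_le hab] at hy
      have hEb : ‖E (((sgn * R : ℝ) : ℂ) + y * Complex.I)‖ ≤ MX := by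
        refine hEbound _ ?_ ?_ <;> simp <;> [exact hy.1.le; exact hy.2]
      have hdd := hdist R (sgn * R) hR hxs y
      rw [hF]
      simp only [norm_div]
      refine div_le_div₀ hMX0 hEb (by linarith) ?_
      simpa using hdd
    calc ‖∫ y in a..b, F (((sgn * R : ℝ) : ℂ) + y * Complex.I)‖
        ≤ MX / (R - |ξ.re|) * |b - a| :=
          intervalIntegral.norm_integral_le_of_norm_le_const hb1
      _ = MX * |b - a| / (R - |ξ.re|) := by ring
  -- vertical K integrals vanish
  have hvertK : ∀ sgn : ℝ, (sgn = 1 ∨ sgn = -1) →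
      Tendsto (fun R : ℝ => ∫ y in a..b,
        (ξ - (((sgn * R : ℝ) : ℂ) + y * Complex.I))⁻¹) atTop (nhds 0) := by
    intro sgn hsgn
    refine hsq _ |b - a| ?_
    intro R hR
    have hd1 : (1 : ℝ) ≤ R - |ξ.re| := by linarith
    have hxs : sgn * R = R ∨ sgn * R = -R := by
      rcases hsgn with rfl | rfl
      · left; ring
      · right; ring
    have hb1 : ∀ y ∈ Set.uIoc a b, ‖(ξ - (((sgn * R : ℝ) : ℂ) + y * Complex.I))⁻¹‖
        ≤ 1 / (R - |ξ.re|) := by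
      intro y _
      have hdd := hdist R (sgn * R) hR hxs y
      rw [norm_inv, one_div]
      refine inv_anti₀ (by linarith) ?_
      simpa using hdd
    calc ‖∫ y in a..b, (ξ - (((sgn * R : ℝ) : ℂ) + y * Complex.I))⁻¹‖
        ≤ 1 / (R - |ξ.re|) * |b - a| :=
          intervalIntegral.norm_integral_le_of_norm_le_const hb1
      _ = |b - a| / (R - |ξ.re|) := by ring
  -- horizontal K limits
  have hKhor : ∀ ω : ℝ, ξ.im ≠ ω → ∀ R : ℝ,
      (∫ t : ℝ in (-R)..R, (ξ - ((t : ℂ) + ω * Complex.I))⁻¹)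
        = Complex.log ((ξ - ω * Complex.I) + R) - Complex.log ((ξ - ω * Complex.I) - R) := by
    intro ω hω R
    have h1 : (∫ t : ℝ in (-R)..R, (ξ - ((t : ℂ) + ω * Complex.I))⁻¹)
        = ∫ t : ℝ in (-R)..R, (ξ - t - ω * Complex.I)⁻¹ :=
      intervalIntegral.integral_congr (fun t _ => by rw [sub_sub])
    rw [h1, Kint ξ ω hω R]
    congr 1 <;> exact congrArg Complex.log (by ring)
  have hKa : Tendsto (fun R : ℝ => ∫ t : ℝ in (-R)..R, (ξ - ((t : ℂ) + a * Complex.I))⁻¹)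
      atTop (nhds (-(Real.pi : ℂ) * Complex.I)) := by
    have hc : 0 < (ξ - (a : ℂ) * Complex.I).im := by simp; linarith
    exact (loglim_pos _ hc).congr fun R => (hKhor a hav.ne' R).symm
  have hKb : Tendsto (fun R : ℝ => ∫ t : ℝ in (-R)..R, (ξ - ((t : ℂ) + b * Complex.I))⁻¹)
      atTop (nhds ((Real.pi : ℂ) * Complex.I)) := by
    have hc : (ξ - (b : ℂ) * Complex.I).im < 0 := by simp; linarith
    exact (loglim_neg _ hc).congr fun R => (hKhor b hvb.ne R).symm
  -- assemble the limits
  have hVFr := hvertF 1 (Or.inl rfl)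
  have hVFl := hvertF (-1) (Or.inr rfl)
  have hVKr := hvertK 1 (Or.inl rfl)
  have hVKl := hvertK (-1) (Or.inr rfl)
  simp only [one_mul, neg_one_mul] at hVFr hVFl hVKr hVKl
  have hLHS : Tendsto (fun R : ℝ =>
      (∫ t : ℝ in (-R)..R, F ((t : ℂ) + a * Complex.I))
        - (∫ t : ℝ in (-R)..R, F ((t : ℂ) + b * Complex.I))
        + Complex.I * (∫ y in a..b, F ((R : ℂ) + y * Complex.I))
        - Complex.I * (∫ y in a..b, F (((-R : ℝ) : ℂ) + y * Complex.I))) atTop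
      (nhds ((∫ t : ℝ, F ((t : ℂ) + a * Complex.I))
        - (∫ t : ℝ, F ((t : ℂ) + b * Complex.I)))) := by
    have := ((hHa.sub hHb).add (hVFr.const_mul Complex.I)).sub (hVFl.const_mul Complex.I)
    simpa using this
  have hRHS : Tendsto (fun R : ℝ => E ξ *
      ((∫ t : ℝ in (-R)..R, (ξ - ((t : ℂ) + a * Complex.I))⁻¹)
        - (∫ t : ℝ in (-R)..R, (ξ - ((t : ℂ) + b * Complex.I))⁻¹)
        + Complex.I * (∫ y in a..b, (ξ - ((R : ℂ) + y * Complex.I))⁻¹)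
        - Complex.I * (∫ y in a..b, (ξ - (((-R : ℝ) : ℂ) + y * Complex.I))⁻¹))) atTop
      (nhds (E ξ * (-(Real.pi : ℂ) * Complex.I - (Real.pi : ℂ) * Complex.I))) := by
    have := (((hKa.sub hKb).add (hVKr.const_mul Complex.I)).sub
      (hVKl.const_mul Complex.I)).const_mul (E ξ)
    simpa using this
  have heq : (fun R : ℝ =>
      (∫ t : ℝ in (-R)..R, F ((t : ℂ) + a * Complex.I))
        - (∫ t : ℝ in (-R)..R, F ((t : ℂ) + b * Complex.I))
        + Complex.I * (∫ y in a..b, F ((R : ℂ) + y * Complex.I))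
        - Complex.I * (∫ y in a..b, F (((-R : ℝ) : ℂ) + y * Complex.I)))
      =ᶠ[atTop] (fun R : ℝ => E ξ *
      ((∫ t : ℝ in (-R)..R, (ξ - ((t : ℂ) + a * Complex.I))⁻¹)
        - (∫ t : ℝ in (-R)..R, (ξ - ((t : ℂ) + b * Complex.I))⁻¹)
        + Complex.I * (∫ y in a..b, (ξ - ((R : ℂ) + y * Complex.I))⁻¹)
        - Complex.I * (∫ y in a..b, (ξ - (((-R : ℝ) : ℂ) + y * Complex.I))⁻¹))) := by
    filter_upwards [eventually_ge_atTop (|ξ.re| + 1)] with R hR using hperR R hR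
  have hfinal := tendsto_nhds_unique (hLHS.congr' heq) hRHS
  rw [hEξ] at hfinal
  have hb' : (∫ t : ℝ, Complex.exp (Complex.I * h * ((t : ℂ) + b * Complex.I - ξ)) *
      φp ((t : ℂ) + b * Complex.I) * Ghat ((t : ℂ) + b * Complex.I) /
        (ξ - t - b * Complex.I)) = ∫ t : ℝ, F ((t : ℂ) + b * Complex.I) :=
    (integral_congr_ae (Filter.Eventually.of_forall fun t => hFform b t)).symm
  have ha' : (∫ t : ℝ, Complex.exp (Complex.I * h * ((t : ℂ) + a * Complex.I - ξ)) *
      φp ((t : ℂ) + a * Complex.I) * Ghat ((t : ℂ) + a * Complex.I) /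
        (ξ - t - a * Complex.I)) = ∫ t : ℝ, F ((t : ℂ) + a * Complex.I) :=
    (integral_congr_ae (Filter.Eventually.of_forall fun t => hFform a t)).symm
  refine ⟨hIb, hIa, ?_⟩
  rw [hb', ha']
  linear_combination -hfinal

end Helpers

/-- The analytic core of Theorem 5.2: the Laplace–Fourier representation (eq:LTFT)+(eq:LTFTpr)
of the no-touch option value `q⁻¹·F⁻¹[φ⁻·Π⁺_h(φ⁺·Ĝ)]`, obtained by crossing the pole at
`η = ξ` and applying the Wiener–Hopf factorization `φ⁺·φ⁻·(q + ψ) = q`. -/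
theorem stmt_15 (σm ωm ωp ωp' σp : ℝ)
    (h₁ : σm < ωm) (h₂ : ωm < ωp) (h₃ : ωp < ωp') (h₄ : ωp' < σp)
    (q : ℂ) (hq : q ≠ 0) (x h : ℝ)
    (φp Ghat : ℂ → ℂ) (C s : ℝ) (hC : 0 < C) (hs : 1 < s)
    (hφp : DifferentiableOn ℂ φp {z : ℂ | σm < z.im ∧ z.im < σp})
    (hGhat : DifferentiableOn ℂ Ghat {z : ℂ | σm < z.im ∧ z.im < σp})
    (hbound : ∀ z : ℂ, σm < z.im → z.im < σp →
      ‖φp z * Ghat z‖ ≤ C * (1 + ‖z‖) ^ (-s))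
    (φm ψ : ℂ → ℂ)
    (hφm : ContinuousOn φm {z : ℂ | z.im = ωp})
    (hψ : ContinuousOn ψ {z : ℂ | z.im = ωp})
    (hne : ∀ ξ : ℂ, ξ.im = ωp → q + ψ ξ ≠ 0)
    (hWH : ∀ ξ : ℂ, ξ.im = ωp → φp ξ * φm ξ * (q + ψ ξ) = q)
    (Iω : ℝ → ℂ → ℂ)
    (hI : ∀ (ω : ℝ) (ξ : ℂ), Iω ω ξ =
      (2 * (Real.pi : ℂ) * Complex.I)⁻¹ *
        ∫ t : ℝ, Complex.exp (Complex.I * h * ((t : ℂ) + ω * Complex.I - ξ)) *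
          φp ((t : ℂ) + ω * Complex.I) * Ghat ((t : ℂ) + ω * Complex.I) /
            (ξ - t - ω * Complex.I))
    (hint₁ : Integrable (fun t : ℝ =>
      Complex.exp (Complex.I * x * ((t : ℂ) + ωp * Complex.I)) *
        φm ((t : ℂ) + ωp * Complex.I) * Iω ωp' ((t : ℂ) + ωp * Complex.I)))
    (hint₂ : Integrable (fun t : ℝ =>
      Complex.exp (Complex.I * x * ((t : ℂ) + ωp * Complex.I)) *
        φm ((t : ℂ) + ωp * Complex.I) * Iω ωm ((t : ℂ) + ωp * Complex.I))) :
    Integrable (fun t : ℝ =>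
      Complex.exp (Complex.I * x * ((t : ℂ) + ωp * Complex.I)) *
        Ghat ((t : ℂ) + ωp * Complex.I) / (q + ψ ((t : ℂ) + ωp * Complex.I))) ∧
    (2 * (Real.pi : ℂ) * q)⁻¹ *
        (∫ t : ℝ, Complex.exp (Complex.I * x * ((t : ℂ) + ωp * Complex.I)) *
          φm ((t : ℂ) + ωp * Complex.I) * Iω ωp' ((t : ℂ) + ωp * Complex.I))
      = (2 * (Real.pi : ℂ) * q)⁻¹ *
          (∫ t : ℝ, Complex.exp (Complex.I * x * ((t : ℂ) + ωp * Complex.I)) *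
            φm ((t : ℂ) + ωp * Complex.I) * Iω ωm ((t : ℂ) + ωp * Complex.I))
        + (2 * (Real.pi : ℂ))⁻¹ *
            ∫ t : ℝ, Complex.exp (Complex.I * x * ((t : ℂ) + ωp * Complex.I)) *
              Ghat ((t : ℂ) + ωp * Complex.I) / (q + ψ ((t : ℂ) + ωp * Complex.I)) := by
  have hπI : (2 * (Real.pi : ℂ) * Complex.I) ≠ 0 := by
    refine mul_ne_zero (mul_ne_zero two_ne_zero ?_) Complex.I_ne_zero
    exact_mod_cast Real.pi_ne_zero
  -- pointwise crossing identity
  have key : ∀ t : ℝ, Iω ωp' ((t : ℂ) + ωp * Complex.I) - Iω ωm ((t : ℂ) + ωp * Complex.I)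
      = φp ((t : ℂ) + ωp * Complex.I) * Ghat ((t : ℂ) + ωp * Complex.I) := by
    intro t
    set ξ : ℂ := (t : ℂ) + ωp * Complex.I with hξ
    have hξim : ξ.im = ωp := by simp [hξ]
    obtain ⟨-, -, hdiff⟩ := crossing σm σp ωm ωp' φp Ghat C s hC hs hφp hGhat hbound h ξ
      h₁ (by rw [hξim]; exact h₂) (by rw [hξim]; exact h₃) h₄
    rw [hI ωp' ξ, hI ωm ξ, ← mul_sub, hdiff, ← mul_assoc, inv_mul_cancel₀ hπI, one_mul]
  -- pointwise Wiener–Hopf identity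
  have key2 : ∀ t : ℝ,
      Complex.exp (Complex.I * x * ((t : ℂ) + ωp * Complex.I)) *
          φm ((t : ℂ) + ωp * Complex.I) * Iω ωp' ((t : ℂ) + ωp * Complex.I)
        - Complex.exp (Complex.I * x * ((t : ℂ) + ωp * Complex.I)) *
          φm ((t : ℂ) + ωp * Complex.I) * Iω ωm ((t : ℂ) + ωp * Complex.I)
      = q * (Complex.exp (Complex.I * x * ((t : ℂ) + ωp * Complex.I)) *
          Ghat ((t : ℂ) + ωp * Complex.I) / (q + ψ ((t : ℂ) + ωp * Complex.I))) := by
    intro t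
    have hξim : ((t : ℂ) + ωp * Complex.I).im = ωp := by simp
    have hne' := hne _ hξim
    have hw := hWH _ hξim
    have hk := key t
    rw [show Complex.exp (Complex.I * x * ((t : ℂ) + ωp * Complex.I)) *
            φm ((t : ℂ) + ωp * Complex.I) * Iω ωp' ((t : ℂ) + ωp * Complex.I)
          - Complex.exp (Complex.I * x * ((t : ℂ) + ωp * Complex.I)) *
            φm ((t : ℂ) + ωp * Complex.I) * Iω ωm ((t : ℂ) + ωp * Complex.I)
        = Complex.exp (Complex.I * x * ((t : ℂ) + ωp * Complex.I)) *
            φm ((t : ℂ) + ωp * Complex.I) *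
            (Iω ωp' ((t : ℂ) + ωp * Complex.I) - Iω ωm ((t : ℂ) + ωp * Complex.I)) by ring,
      hk]
    rw [mul_div_assoc', eq_div_iff hne']
    linear_combination (Complex.exp (Complex.I * x * ((t : ℂ) + ωp * Complex.I)) *
      Ghat ((t : ℂ) + ωp * Complex.I)) * hw
  -- integrability of the target integrand
  have hgInt : Integrable (fun t : ℝ =>
      Complex.exp (Complex.I * x * ((t : ℂ) + ωp * Complex.I)) *
        Ghat ((t : ℂ) + ωp * Complex.I) / (q + ψ ((t : ℂ) + ωp * Complex.I))) := by
    have h0 := (hint₁.sub hint₂).const_mul q⁻¹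
    refine h0.congr (Filter.Eventually.of_forall fun t => ?_)
    simp only [Pi.sub_apply]
    rw [key2 t, ← mul_assoc, inv_mul_cancel₀ hq, one_mul]
  refine ⟨hgInt, ?_⟩
  -- integral identity
  have hAB : (∫ t : ℝ, Complex.exp (Complex.I * x * ((t : ℂ) + ωp * Complex.I)) *
        φm ((t : ℂ) + ωp * Complex.I) * Iω ωp' ((t : ℂ) + ωp * Complex.I))
      - (∫ t : ℝ, Complex.exp (Complex.I * x * ((t : ℂ) + ωp * Complex.I)) *
        φm ((t : ℂ) + ωp * Complex.I) * Iω ωm ((t : ℂ) + ωp * Complex.I))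
      = q * ∫ t : ℝ, Complex.exp (Complex.I * x * ((t : ℂ) + ωp * Complex.I)) *
        Ghat ((t : ℂ) + ωp * Complex.I) / (q + ψ ((t : ℂ) + ωp * Complex.I)) := by
    rw [← integral_sub hint₁ hint₂]
    rw [integral_congr_ae (Filter.Eventually.of_forall fun t => key2 t)]
    exact integral_const_mul q _
  have hGg : (∫ t : ℝ, Complex.exp (Complex.I * x * ((t : ℂ) + ωp * Complex.I)) *
        Ghat ((t : ℂ) + ωp * Complex.I) / (q + ψ ((t : ℂ) + ωp * Complex.I)))
      = q⁻¹ * ((∫ t : ℝ, Complex.exp (Complex.I * x * ((t : ℂ) + ωp * Complex.I)) *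
          φm ((t : ℂ) + ωp * Complex.I) * Iω ωp' ((t : ℂ) + ωp * Complex.I))
        - (∫ t : ℝ, Complex.exp (Complex.I * x * ((t : ℂ) + ωp * Complex.I)) *
          φm ((t : ℂ) + ωp * Complex.I) * Iω ωm ((t : ℂ) + ωp * Complex.I))) := by
    rw [hAB, ← mul_assoc, inv_mul_cancel₀ hq, one_mul]
  rw [hGg, mul_inv]
  ring
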